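/- Dold's Lemma: given Hurewicz cofibrations i : A → B and i' : A → C of topological spaces and a map f : B → C with f ∘ i = i', if f is a homotopy equivalence then f is a homotopy equivalence under A, i.e. there is g : C → B with g ∘ i' = i and homotopies g ∘ f ≃ id_B and f ∘ g ≃ id_C that are constant on A. -/

import Mathlib

open unitInterval

universe u

/-- A continuous map `i : A → B` is a Hurewicz cofibration if it has the homotopy
extension property with respect to every topological space. -/
def IsHurewiczCofibration {A B : Type u} [TopologicalSpace A] [TopologicalSpace B]
    (i : C(A, B)) : Prop :=
  ∀ (Z : Type u) [TopologicalSpace Z] (f : C(B, Z)) (H : C(I × A, Z)),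
    (∀ a, H (0, a) = f (i a)) →
    ∃ H' : C(I × B, Z), (∀ b, H' (0, b) = f b) ∧ ∀ (t : I) (a : A), H' (t, i a) = H (t, a)

/-- `u` and `v : B → Z` are homotopic under `A` (relative to `i : A → B`): there is a
homotopy from `u` to `v` which is constant on `A`. -/
def HomotopicUnder {A B Z : Type u} [TopologicalSpace A] [TopologicalSpace B]
    [TopologicalSpace Z] (i : C(A, B)) (u v : C(B, Z)) : Prop :=
  ∃ h : C(I × B, Z), (∀ b, h (0, b) = u b) ∧ (∀ b, h (1, b) = v b) ∧
    ∀ (t : I) (a : A), h (t, i a) = u (i a)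

noncomputable def toI (t : ℝ) : I := Set.projIcc 0 1 zero_le_one t

@[continuity, fun_prop]
lemma continuous_toI : Continuous toI := continuous_projIcc (h := zero_le_one)

lemma toI_coe (t : I) : toI (t : ℝ) = t := by
  simp [toI, Set.projIcc_of_mem, t.2]

lemma toI_zero : toI 0 = 0 := toI_coe 0
lemma toI_one : toI 1 = 1 := toI_coe 1

lemma toI_of_le_zero {t : ℝ} (h : t ≤ 0) : toI t = 0 := by
  rw [toI, Set.projIcc_of_le_left _ h]; rfl

lemma toI_of_one_le {t : ℝ} (h : 1 ≤ t) : toI t = 1 := by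
  rw [toI, Set.projIcc_of_right_le _ h]; rfl

variable {A B X Z W : Type u} [TopologicalSpace A] [TopologicalSpace B]
  [TopologicalSpace X] [TopologicalSpace Z] [TopologicalSpace W]

lemma HomotopicUnder.refl (i : C(A,B)) (u : C(B,Z)) : HomotopicUnder i u u := by
  refine ⟨⟨fun p => u p.2, by continuity⟩, fun b => rfl, fun b => rfl, fun t a => rfl⟩

lemma HomotopicUnder.symm {i : C(A,B)} {u v : C(B,Z)} (h : HomotopicUnder i u v) :
    HomotopicUnder i v u := by
  obtain ⟨h, h0, h1, hA⟩ := h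
  refine ⟨⟨fun p => h (σ p.1, p.2), by continuity⟩, ?_, ?_, ?_⟩
  · intro b; simp [h1 b]
  · intro b; simp [h0 b]
  · intro t a
    have h1a : v (i a) = u (i a) := by rw [← h1 (i a), hA 1 a]
    simp [hA, h1a]

lemma HomotopicUnder.trans {i : C(A,B)} {u v w : C(B,Z)} (h : HomotopicUnder i u v)
    (h' : HomotopicUnder i v w) : HomotopicUnder i u w := by
  obtain ⟨h, h0, h1, hA⟩ := h
  obtain ⟨k, k0, k1, kA⟩ := h'
  have hc : Continuous fun p : I × B => if (p.1:ℝ) ≤ 1/2 then h (toI (2*p.1), p.2)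
      else k (toI (2*p.1-1), p.2) := by
    refine Continuous.if_le ?_ ?_ (by fun_prop) continuous_const ?_
    · fun_prop
    · fun_prop
    · intro p hp
      rw [hp]
      norm_num [toI_one, toI_zero, h1, k0]
  refine ⟨⟨_, hc⟩, ?_, ?_, ?_⟩
  · intro b; norm_num [toI_zero, h0]
  · intro b; norm_num [toI_one, k1]
  · intro t a
    have hva : v (i a) = u (i a) := by rw [← h1 (i a), hA 1 a]
    by_cases ht : (t:ℝ) ≤ 1/2 <;> simp [ht, hA, kA, hva]

lemma HomotopicUnder.compLeft {i : C(A,B)} {u v : C(B,Z)} (h : HomotopicUnder i u v)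
    (w : C(Z,W)) : HomotopicUnder i (w.comp u) (w.comp v) := by
  obtain ⟨h, h0, h1, hA⟩ := h
  exact ⟨w.comp h, fun b => by simp [h0], fun b => by simp [h1], fun t a => by simp [hA]⟩

lemma HomotopicUnder.compRight {j : C(A,Z)} {u v : C(Z,W)} (h : HomotopicUnder j u v)
    {i : C(A,B)} (e : C(B,Z)) (he : ∀ a, e (i a) = j a) :
    HomotopicUnder i (u.comp e) (v.comp e) := by
  obtain ⟨h, h0, h1, hA⟩ := h
  refine ⟨h.comp ⟨fun p => (p.1, e p.2), by continuity⟩, fun b => by simp [h0],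
    fun b => by simp [h1], fun t a => by simp [he, hA]⟩

lemma HomotopicUnder.homotopic {i : C(A,B)} {u v : C(B,Z)} (h : HomotopicUnder i u v) :
    u.Homotopic v := by
  obtain ⟨h, h0, h1, _⟩ := h
  exact ⟨{ toContinuousMap := h, map_zero_left := h0, map_one_left := h1 }⟩

/-- Deformation lemma: a homotopy `H : u ≃ v` whose restriction to `A` admits a
null-homotopy square `S` can be corrected into a homotopy under `A`. -/
lemma deform (i : C(A,B)) (hi : IsHurewiczCofibration i) (u v : C(B,Z))
    (H : C(I × B, Z)) (hH0 : ∀ b, H (0, b) = u b) (hH1 : ∀ b, H (1, b) = v b)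
    (S : C(I × I × A, Z))
    (hS0 : ∀ t a, S (0, t, a) = H (t, i a))
    (hS1 : ∀ t a, S (1, t, a) = u (i a))
    (hSb : ∀ s a, S (s, 0, a) = u (i a))
    (hSt : ∀ s a, S (s, 1, a) = u (i a)) :
    HomotopicUnder i u v := by
  -- curry to use HEP with target C(I, Z)
  let f₀ : C(B, C(I, Z)) := (H.comp ⟨Prod.swap, continuous_swap⟩).curry
  let G : C(I × A, C(I, Z)) :=
    (S.comp ⟨fun p : (I × A) × I => (p.1.1, p.2, p.1.2), by fun_prop⟩).curry
  obtain ⟨G', hG0, hGA⟩ := hi (C(I, Z)) f₀ G (by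
    intro a
    ext t
    simp [G, f₀, ContinuousMap.curry_apply, hS0])
  -- L (s,t,b) := G' (s,b) t
  let L : C((I × B) × I, Z) := G'.uncurry
  have hL : ∀ s t (b : B), L ((s, b), t) = G' (s, b) t := fun _ _ _ => rfl
  -- reparametrisation
  have hψc : Continuous fun t : I => (((if (t:ℝ) ≤ 1/3 then toI (3*t) else
      if (t:ℝ) ≤ 2/3 then 1 else toI (3-3*t)) : I),
      ((if (t:ℝ) ≤ 1/3 then 0 else if (t:ℝ) ≤ 2/3 then toI (3*t-1) else 1) : I)) := by
    apply Continuous.prodMk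
    · refine Continuous.if_le ?_ ?_ (by fun_prop) continuous_const ?_
      · fun_prop
      · refine Continuous.if_le continuous_const ?_ (by fun_prop) continuous_const ?_
        · fun_prop
        · intro t ht; rw [ht]; norm_num [toI_one]
      · intro t ht; rw [ht]; norm_num [toI_one]
    · refine Continuous.if_le continuous_const ?_ (by fun_prop) continuous_const ?_
      · refine Continuous.if_le ?_ continuous_const (by fun_prop) continuous_const ?_
        · fun_prop
        · intro t ht; rw [ht]; norm_num [toI_one]
      · intro t ht; rw [ht]; norm_num [toI_zero]
  let psi : C(I, I × I) := ⟨_, hψc⟩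
  let h : C(I × B, Z) := L.comp ⟨fun p : I × B => (((psi p.1).1, p.2), (psi p.1).2), by
    have hc := psi.continuous.comp (continuous_fst : Continuous fun p : I × B => p.1)
    exact (hc.fst.prodMk continuous_snd).prodMk hc.snd⟩
  have hh : ∀ (t : I) (b : B), h (t, b) = G' ((psi t).1, b) ((psi t).2) := fun _ _ => rfl
  refine ⟨h, ?_, ?_, ?_⟩
  · intro b
    have : h (0, b) = G' ((psi 0).1, b) ((psi 0).2) := rfl
    rw [this]
    have hpsi : psi 0 = (0, 0) := by
      show ((if ((0:I):ℝ) ≤ 1/3 then _ else _ : I), (if ((0:I):ℝ) ≤ 1/3 then _ else _ : I)) = _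
      norm_num [toI_zero]
    rw [hpsi]
    rw [hG0 b]
    show H (0, b) = u b
    exact hH0 b
  · intro b
    have : h (1, b) = G' ((psi 1).1, b) ((psi 1).2) := rfl
    rw [this]
    have hpsi : psi 1 = (0, 1) := by
      show ((if ((1:I):ℝ) ≤ 1/3 then _ else _ : I), (if ((1:I):ℝ) ≤ 1/3 then _ else _ : I)) = _
      norm_num [toI_zero]
    rw [hpsi]
    rw [hG0 b]
    show H (1, b) = v b
    exact hH1 b
  · intro t a
    have : h (t, i a) = G' ((psi t).1, i a) ((psi t).2) := rfl
    rw [this, hGA (psi t).1 a]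
    have hG : ∀ (s t' : I), G (s, a) t' = S (s, t', a) := fun _ _ => rfl
    rw [hG]
    have hpsi1 : (psi t).1 = (if (t:ℝ) ≤ 1/3 then toI (3*t) else
        if (t:ℝ) ≤ 2/3 then 1 else toI (3-3*t)) := rfl
    have hpsi2 : (psi t).2 = (if (t:ℝ) ≤ 1/3 then 0 else
        if (t:ℝ) ≤ 2/3 then toI (3*t-1) else 1) := rfl
    rw [hpsi1, hpsi2]
    by_cases h3 : (t:ℝ) ≤ 1/3
    · simp only [if_pos h3]
      exact hSb _ a
    · by_cases h6 : (t:ℝ) ≤ 2/3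
      · simp only [if_neg h3, if_pos h6]
        exact hS1 _ a
      · simp only [if_neg h3, if_neg h6]
        exact hSt _ a

/-- Key lemma: if `i` is a cofibration and `f : B → B` is a map under `A` homotopic to
the identity, then `f` admits a left homotopy inverse under `A`. -/
lemma key (i : C(A,B)) (hi : IsHurewiczCofibration i) (f : C(B,B)) (hf : ∀ a, f (i a) = i a)
    (h : C(I × B, B)) (h0 : ∀ b, h (0, b) = f b) (h1 : ∀ b, h (1, b) = b) :
    ∃ g : C(B,B), (∀ a, g (i a) = i a) ∧
      HomotopicUnder i (g.comp f) (ContinuousMap.id B) := by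
  obtain ⟨K, K0, KA⟩ := hi B (ContinuousMap.id B)
    (h.comp ⟨fun p : I × A => (p.1, i p.2), by fun_prop⟩)
    (by intro a; simp [h0, hf])
  have KA' : ∀ (t : I) (a : A), K (t, i a) = h (t, i a) := fun t a => KA t a
  let g : C(B,B) := ⟨fun b => K (1, b), K.continuous.comp (by fun_prop)⟩
  have hg : ∀ a, g (i a) = i a := by
    intro a; show K (1, i a) = i a; rw [KA', h1]
  have huA : ∀ a, (g.comp f) (i a) = i a := by
    intro a; show K (1, f (i a)) = i a; rw [hf, KA', h1]
  -- the homotopy M : g ∘ f ≃ id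
  have hMc : Continuous fun p : I × B => if (p.1:ℝ) ≤ 1/2 then g (h (toI (2*p.1), p.2))
      else K (toI (2-2*p.1), p.2) := by
    refine Continuous.if_le ?_ ?_ (by fun_prop) continuous_const ?_
    · exact g.continuous.comp (h.continuous.comp (by fun_prop))
    · exact K.continuous.comp (by fun_prop)
    · intro p hp
      rw [hp]
      norm_num [toI_one, h1]
      rfl
  let M : C(I × B, B) := ⟨_, hMc⟩
  -- the square W : null-homotopy of the restriction of M to A
  have hWc : Continuous fun p : I × I × A =>
      if (p.1:ℝ) ≤ 1/2 then
        K (toI (if (p.2.1:ℝ) ≤ 1/2 then (1-2*p.1) + 2*p.1*(1-2*p.2.1) else (1-2*p.1)*(2-2*p.2.1)),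
          h (toI (if (p.2.1:ℝ) ≤ 1/2 then (1-2*p.1)*(2*p.2.1) else (1-2*p.1) + 2*p.1*(2*p.2.1-1)),
            i p.2.2))
      else K (toI (max |2*p.2.1-1| (2*p.1-1)), h (0, i p.2.2)) := by
    have hc1 : Continuous fun p : I × I × A =>
        (if (p.2.1:ℝ) ≤ 1/2 then (1-2*p.1) + 2*p.1*(1-2*p.2.1) else (1-2*p.1)*(2-2*p.2.1) : ℝ) := by
      refine Continuous.if_le (by fun_prop) (by fun_prop) (by fun_prop) continuous_const ?_
      intro p hp; rw [hp]; ring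
    have hc2 : Continuous fun p : I × I × A =>
        (if (p.2.1:ℝ) ≤ 1/2 then (1-2*p.1)*(2*p.2.1) else (1-2*p.1) + 2*p.1*(2*p.2.1-1) : ℝ) := by
      refine Continuous.if_le (by fun_prop) (by fun_prop) (by fun_prop) continuous_const ?_
      intro p hp; rw [hp]; ring
    refine Continuous.if_le ?_ ?_ (by fun_prop) continuous_const ?_
    · exact K.continuous.comp ((continuous_toI.comp hc1).prodMk
        (h.continuous.comp ((continuous_toI.comp hc2).prodMk (by fun_prop))))
    · exact K.continuous.comp ((continuous_toI.comp (by fun_prop)).prodMk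
        (h.continuous.comp (by fun_prop)))
    · intro p hpr
      rw [hpr]
      set t := p.2.1 with hts
      by_cases ht : (t:ℝ) ≤ 1/2
      · simp only [if_pos ht]
        have e1 : (1-2*(1/2:ℝ)) + 2*(1/2)*(1-2*(t:ℝ)) = 1-2*(t:ℝ) := by ring
        have e2 : (1-2*(1/2:ℝ))*(2*(t:ℝ)) = 0 := by ring
        have e3 : |2*(t:ℝ)-1| = 1-2*(t:ℝ) := by
          rw [abs_of_nonpos (by linarith)]; ring
        have e4 : max (1-2*(t:ℝ)) (2*(1/2:ℝ)-1) = 1-2*(t:ℝ) := by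
          rw [max_eq_left (by linarith [t.2.2])]
        rw [e1, e2, e3, e4, toI_zero]
      · simp only [if_neg ht]
        have e1 : (1-2*(1/2:ℝ))*(2-2*(t:ℝ)) = 0 := by ring
        have e2 : (1-2*(1/2:ℝ)) + 2*(1/2)*(2*(t:ℝ)-1) = 2*(t:ℝ)-1 := by ring
        have e3 : |2*(t:ℝ)-1| = 2*(t:ℝ)-1 := by
          rw [abs_of_nonneg (by linarith)]
        have e4 : max (2*(t:ℝ)-1) (2*(1/2:ℝ)-1) = 2*(t:ℝ)-1 := by
          rw [max_eq_left (by linarith [t.2.1])]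
        rw [e1, e2, e3, e4, toI_zero]
        rw [K0, h0, hf, KA']
        rfl
  let Wm : C(I × I × A, B) := ⟨_, hWc⟩
  have MA : ∀ (t : I) (b : B), M (t, b) =
      if (t:ℝ) ≤ 1/2 then g (h (toI (2*t), b)) else K (toI (2-2*t), b) := fun _ _ => rfl
  have WmA : ∀ (r t : I) (a : A), Wm (r, t, a) =
      if (r:ℝ) ≤ 1/2 then
        K (toI (if (t:ℝ) ≤ 1/2 then (1-2*(r:ℝ)) + 2*r*(1-2*t) else (1-2*(r:ℝ))*(2-2*t)),
          h (toI (if (t:ℝ) ≤ 1/2 then (1-2*(r:ℝ))*(2*t) else (1-2*(r:ℝ)) + 2*r*(2*t-1)), i a))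
      else K (toI (max |2*(t:ℝ)-1| (2*(r:ℝ)-1)), h (0, i a)) := fun _ _ _ => rfl
  have c0 : ((0:I):ℝ) = 0 := rfl
  have c1 : ((1:I):ℝ) = 1 := rfl
  refine ⟨g, hg, ?_⟩
  refine deform i hi (g.comp f) (ContinuousMap.id B) M ?_ ?_ Wm ?_ ?_ ?_ ?_
  · intro b
    rw [MA, if_pos (by rw [c0]; norm_num)]
    rw [c0]
    norm_num [toI_zero, h0]
  · intro b
    rw [MA, if_neg (by rw [c1]; norm_num)]
    rw [c1]
    norm_num [toI_zero, K0]
  · intro t a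
    rw [MA, WmA, if_pos (by rw [c0]; norm_num)]
    by_cases ht : (t:ℝ) ≤ 1/2
    · simp only [if_pos ht]
      have e1 : (1-2*((0:I):ℝ)) + 2*((0:I):ℝ)*(1-2*(t:ℝ)) = 1 := by rw [c0]; ring
      have e2 : (1-2*((0:I):ℝ))*(2*(t:ℝ)) = 2*(t:ℝ) := by rw [c0]; ring
      rw [e1, e2, toI_one]
      rfl
    · simp only [if_neg ht]
      have e1 : (1-2*((0:I):ℝ))*(2-2*(t:ℝ)) = 2-2*(t:ℝ) := by rw [c0]; ring
      have e2 : (1-2*((0:I):ℝ)) + 2*((0:I):ℝ)*(2*(t:ℝ)-1) = 1 := by rw [c0]; ring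
      rw [e1, e2, toI_one, h1]
  · intro t a
    rw [WmA, if_neg (by rw [c1]; norm_num)]
    have e4 : max |2*(t:ℝ)-1| (2*((1:I):ℝ)-1) = 1 := by
      rw [c1]
      norm_num
      rw [abs_le]
      constructor
      · linarith [unitInterval.nonneg t]
      · linarith [unitInterval.le_one t]
    rw [e4, toI_one, h0, hf, huA]
    show K (1, i a) = i a
    rw [KA', h1]
  · intro s a
    rw [WmA, huA]
    by_cases hs : (s:ℝ) ≤ 1/2
    · rw [if_pos hs]
      simp only [if_pos (by rw [c0]; norm_num : ((0:I):ℝ) ≤ 1/2)]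
      have e1 : (1-2*(s:ℝ)) + 2*(s:ℝ)*(1-2*((0:I):ℝ)) = 1 := by rw [c0]; ring
      have e2 : (1-2*(s:ℝ))*(2*((0:I):ℝ)) = 0 := by rw [c0]; ring
      rw [e1, e2, toI_one, toI_zero, h0, hf]
      show K (1, i a) = i a
      rw [KA', h1]
    · rw [if_neg hs]
      have e4 : max |2*((0:I):ℝ)-1| (2*(s:ℝ)-1) = 1 := by
        rw [c0]
        norm_num
        linarith [unitInterval.le_one s]
      rw [e4, toI_one, h0, hf]
      show K (1, i a) = i a
      rw [KA', h1]
  · intro s a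
    rw [WmA, huA]
    by_cases hs : (s:ℝ) ≤ 1/2
    · rw [if_pos hs]
      simp only [if_neg (by rw [c1]; norm_num : ¬ ((1:I):ℝ) ≤ 1/2)]
      have e1 : (1-2*(s:ℝ))*(2-2*((1:I):ℝ)) = 0 := by rw [c1]; ring
      have e2 : (1-2*(s:ℝ)) + 2*(s:ℝ)*(2*((1:I):ℝ)-1) = 1 := by rw [c1]; ring
      rw [e1, e2, toI_one, toI_zero, K0, h1]
      rfl
    · rw [if_neg hs]
      have e4 : max |2*((1:I):ℝ)-1| (2*(s:ℝ)-1) = 1 := by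
        rw [c1]
        norm_num
        linarith [unitInterval.le_one s]
      rw [e4, toI_one, h0, hf]
      show K (1, i a) = i a
      rw [KA', h1]

/-- Upgrading a free left homotopy inverse to a left homotopy inverse under `A`. -/
lemma leftInv (i : C(A,B)) (i' : C(A,X)) (hi : IsHurewiczCofibration i)
    (hi' : IsHurewiczCofibration i') (f : C(B,X)) (hf : ∀ a, f (i a) = i' a)
    (g₀ : C(X,B)) (hg : (g₀.comp f).Homotopic (ContinuousMap.id B)) :
    ∃ g : C(X,B), (∀ a, g (i' a) = i a) ∧
      HomotopicUnder i (g.comp f) (ContinuousMap.id B) := by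
  obtain ⟨p⟩ := hg
  obtain ⟨P, P0, PA⟩ := hi' B g₀
    (p.toContinuousMap.comp ⟨fun q : I × A => (q.1, i q.2), by fun_prop⟩)
    (by intro a
        show p (0, i a) = g₀ (i' a)
        rw [p.apply_zero]
        show g₀ (f (i a)) = g₀ (i' a)
        rw [hf])
  have PA' : ∀ (t : I) (a : A), P (t, i' a) = p (t, i a) := fun t a => PA t a
  let g₁ : C(X,B) := ⟨fun x => P (1, x), P.continuous.comp (by fun_prop)⟩
  have hg₁A : ∀ a, g₁ (i' a) = i a := by
    intro a
    show P (1, i' a) = i a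
    rw [PA', p.apply_one]
    rfl
  -- homotopy from g₁ ∘ f to id
  have hNc : Continuous fun q : I × B => if (q.1:ℝ) ≤ 1/2 then P (toI (1-2*q.1), f q.2)
      else p.toContinuousMap (toI (2*q.1-1), q.2) := by
    refine Continuous.if_le ?_ ?_ (by fun_prop) continuous_const ?_
    · exact P.continuous.comp (by fun_prop)
    · exact p.toContinuousMap.continuous.comp (by fun_prop)
    · intro q hq
      rw [hq]
      have e1 : 1-2*(1/2:ℝ) = 0 := by norm_num
      have e2 : 2*(1/2:ℝ)-1 = 0 := by norm_num
      rw [e1, e2, toI_zero, P0]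
      show g₀ (f q.2) = p (0, q.2)
      rw [p.apply_zero]
      rfl
  have hufA : ∀ a, (g₁.comp f) (i a) = i a := by
    intro a
    show g₁ (f (i a)) = i a
    rw [hf, hg₁A]
  obtain ⟨k, hkA, hk⟩ := key i hi (g₁.comp f) hufA ⟨_, hNc⟩
    (by intro b
        show (if ((0:I):ℝ) ≤ 1/2 then P (toI (1-2*((0:I):ℝ)), f b) else _) = _
        rw [if_pos (by norm_num [show ((0:I):ℝ) = 0 from rfl])]
        have e1 : 1-2*((0:I):ℝ) = 1 := by norm_num [show ((0:I):ℝ) = 0 from rfl]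
        rw [e1, toI_one]
        rfl)
    (by intro b
        show (if ((1:I):ℝ) ≤ 1/2 then _ else p.toContinuousMap (toI (2*((1:I):ℝ)-1), b)) = _
        rw [if_neg (by norm_num [show ((1:I):ℝ) = 1 from rfl])]
        have e1 : 2*((1:I):ℝ)-1 = 1 := by norm_num [show ((1:I):ℝ) = 1 from rfl]
        rw [e1, toI_one]
        exact p.apply_one b)
  exact ⟨k.comp g₁, by intro a; show k (g₁ (i' a)) = i a; rw [hg₁A, hkA], hk⟩


/-- Dold's Lemma: given Hurewicz cofibrations `i : A → B` and `i' : A → X` and a map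
`f : B → X` under `A` which is a homotopy equivalence, `f` is a homotopy equivalence
under `A`. -/
theorem dold_lemma {A B X : Type u}
    [TopologicalSpace A] [TopologicalSpace B] [TopologicalSpace X]
    (i : C(A, B)) (i' : C(A, X)) (f : C(B, X))
    (hi : IsHurewiczCofibration i) (hi' : IsHurewiczCofibration i')
    (hcomm : ∀ a, f (i a) = i' a)
    (g₀ : C(X, B))
    (h₁ : (f.comp g₀).Homotopic (ContinuousMap.id X))
    (h₂ : (g₀.comp f).Homotopic (ContinuousMap.id B)) :
    ∃ g : C(X, B), (∀ a, g (i' a) = i a) ∧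
      HomotopicUnder i (g.comp f) (ContinuousMap.id B) ∧
      HomotopicUnder i' (f.comp g) (ContinuousMap.id X) := by
  obtain ⟨g₂, hg₂A, hg₂⟩ := leftInv i i' hi hi' f hcomm g₀ h₂
  have hgf : (g₂.comp f).Homotopic (ContinuousMap.id B) := hg₂.homotopic
  have A1 : ((f.comp g₂).comp (f.comp g₀)).Homotopic
      ((f.comp g₂).comp (ContinuousMap.id X)) :=
    ContinuousMap.Homotopic.comp (ContinuousMap.Homotopic.refl _) h₁
  have A2 : (f.comp ((g₂.comp f).comp g₀)).Homotopic
      (f.comp ((ContinuousMap.id B).comp g₀)) :=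
    ContinuousMap.Homotopic.comp
      (ContinuousMap.Homotopic.refl f)
      (ContinuousMap.Homotopic.comp hgf (ContinuousMap.Homotopic.refl g₀))
  have T0 : (f.comp g₂).Homotopic ((f.comp g₂).comp (f.comp g₀)) := A1.symm
  have T0' : ((f.comp g₂).comp (f.comp g₀)).Homotopic (f.comp g₀) := A2
  have hfree : (f.comp g₂).Homotopic (ContinuousMap.id X) := (T0.trans T0').trans h₁
  obtain ⟨l, hlA, hl⟩ := leftInv i' i hi' hi g₂ hg₂A f hfree
  refine ⟨g₂, hg₂A, hg₂, ?_⟩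
  have he : ∀ a, (f.comp g₂) (i' a) = i' a := by
    intro a; show f (g₂ (i' a)) = i' a; rw [hg₂A, hcomm]
  have S1 : HomotopicUnder i' ((l.comp g₂).comp (f.comp g₂))
      ((ContinuousMap.id X).comp (f.comp g₂)) := hl.compRight (f.comp g₂) he
  have S2 : HomotopicUnder i' ((l.comp (g₂.comp f)).comp g₂)
      ((l.comp (ContinuousMap.id B)).comp g₂) :=
    (hg₂.compLeft l).compRight g₂ hg₂A
  have U1 : HomotopicUnder i' (f.comp g₂) ((l.comp (g₂.comp f)).comp g₂) := S1.symm
  have U2 : HomotopicUnder i' ((l.comp (g₂.comp f)).comp g₂) (l.comp g₂) := S2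
  exact (U1.trans U2).trans hl
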